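/- Fix any τ ∈ (0,1). Then P( f(S_1,…,S_r,S_{n+1}) ≤ ē_τ^M ) ≥ τ·(n−r)/(n+1). (This is the one-sided coverage guarantee of Proposition 1: the interval (−∞, ē_τ^M] is a level-(τ(n−r)/(n+1)) one-sided forecast interval for the transfer error on the unseen domain n+1.) -/

import Mathlib

open MeasureTheory ProbabilityTheory

/-- The set of (r+1)-tuples of pairwise distinct indices from `Fin m`
(tuples of `s` pairwise distinct indices, i.e. injections `Fin s → Fin m`). -/
abbrev TransferUQ.Tup (s m : ℕ) := {g : Fin s → Fin m // Function.Injective g}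

open Classical in
/-- `F_M((-∞, b])`: the mass that the pooled empirical distribution of transfer errors
`F_M = ((n-r-1)!/n!) ∑_{(𝒯,d) ∈ 𝕋_{r+1,n}} δ_{e_{𝒯,d}}` assigns to `(-∞, b]`,
where `E g` is the transfer error associated to the tuple `g ∈ 𝕋_{r+1,n}`. -/
noncomputable def TransferUQ.FMIic (n r : ℕ) (E : TransferUQ.Tup (r+1) n → ℝ) (b : ℝ) : ℝ :=
  ((n - r - 1).factorial : ℝ) / (n.factorial : ℝ) *
    (Finset.univ.filter (fun g : TransferUQ.Tup (r+1) n => E g ≤ b)).card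

/-- The upper `τ`-th quantile `ē_τ^M = inf {b : F_M((-∞,b]) ≥ τ}` of the pooled empirical
distribution of transfer errors. -/
noncomputable def TransferUQ.ebar (n r : ℕ) (E : TransferUQ.Tup (r+1) n → ℝ) (τ : ℝ) : ℝ :=
  sInf {b : ℝ | τ ≤ TransferUQ.FMIic n r E b}

namespace TransferUQ

lemma card_tup (s m : ℕ) : Fintype.card (Tup s m) = m.descFactorial s := by
  classical
  rw [Fintype.card_congr (Equiv.subtypeInjectiveEquivEmbedding (Fin s) (Fin m))]
  simp

lemma coeff_mul_card {n r : ℕ} (hrn : r < n) :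
    ((n - r - 1).factorial : ℝ) / (n.factorial : ℝ) * (Fintype.card (Tup (r+1) n)) = 1 := by
  rw [card_tup]
  have h := Nat.factorial_mul_descFactorial (show r + 1 ≤ n by omega)
  have h2 : n - (r + 1) = n - r - 1 := by omega
  rw [h2] at h
  rw [div_mul_eq_mul_div, div_eq_one_iff_eq (by exact_mod_cast n.factorial_ne_zero)]
  exact_mod_cast h

lemma FMIic_nonneg {n r : ℕ} (E : Tup (r+1) n → ℝ) (b : ℝ) : 0 ≤ FMIic n r E b := by
  unfold FMIic; positivity

lemma FMIic_mono {n r : ℕ} (E : Tup (r+1) n → ℝ) {b b' : ℝ} (h : b ≤ b') :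
    FMIic n r E b ≤ FMIic n r E b' := by
  unfold FMIic
  apply mul_le_mul_of_nonneg_left _ (by positivity)
  have : (Finset.univ.filter (fun g : Tup (r+1) n => E g ≤ b)) ⊆
      (Finset.univ.filter (fun g : Tup (r+1) n => E g ≤ b')) :=
    Finset.monotone_filter_right _ (fun g _ hg => le_trans hg h)
  exact_mod_cast Finset.card_le_card this

open Classical in
lemma exists_ici {n r : ℕ} (hrn : r < n) {c : ℝ} (hc : 0 < c) (hc1 : c ≤ 1)
    (E : Tup (r+1) n → ℝ) :
    ∃ g : Tup (r+1) n, {b : ℝ | c ≤ FMIic n r E b} = Set.Ici (E g) := by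
  have hTup : Nonempty (Tup (r+1) n) :=
    ⟨⟨Fin.castLE (by omega), Fin.castLE_injective _⟩⟩
  have huniv : (Finset.univ : Finset (Tup (r+1) n)).Nonempty := Finset.univ_nonempty
  set T : Finset ℝ := Finset.univ.image E with hT
  have hTne : T.Nonempty := huniv.image E
  -- the max value is in the set A
  have hmax : c ≤ FMIic n r E (T.max' hTne) := by
    have hfull : (Finset.univ.filter (fun g : Tup (r+1) n => E g ≤ T.max' hTne))
        = Finset.univ := by
      apply Finset.filter_true_of_mem
      intro g _
      exact T.le_max' _ (Finset.mem_image_of_mem E (Finset.mem_univ g))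
    calc c ≤ 1 := hc1
    _ = _ := (coeff_mul_card hrn).symm
    _ = FMIic n r E (T.max' hTne) := by
        unfold FMIic; rw [hfull]; simp [Finset.card_univ]
  set W : Finset ℝ := T.filter (fun t => c ≤ FMIic n r E t) with hW
  have hWne : W.Nonempty :=
    ⟨T.max' hTne, Finset.mem_filter.2 ⟨T.max'_mem hTne, hmax⟩⟩
  obtain ⟨hWT, hWA⟩ := Finset.mem_filter.1 (W.min'_mem hWne)
  obtain ⟨g, -, hg⟩ := Finset.mem_image.1 hWT
  refine ⟨g, Set.Subset.antisymm ?_ ?_⟩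
  · intro b hb
    simp only [Set.mem_setOf_eq] at hb
    -- filter nonempty
    have hne : (Finset.univ.filter (fun g : Tup (r+1) n => E g ≤ b)).Nonempty := by
      by_contra hemp
      rw [Finset.not_nonempty_iff_eq_empty] at hemp
      have : FMIic n r E b = 0 := by unfold FMIic; rw [hemp]; simp
      linarith
    set t : ℝ := ((Finset.univ.filter (fun g : Tup (r+1) n => E g ≤ b)).image E).max'
      (hne.image E) with ht
    have htmem := ((Finset.univ.filter (fun g : Tup (r+1) n => E g ≤ b)).image E).max'_mem
      (hne.image E)
    rw [Finset.mem_image] at htmem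
    obtain ⟨gt, hgtmem, hgt⟩ := htmem
    have htb : t ≤ b := by
      rw [ht, ← hgt]; exact (Finset.mem_filter.1 hgtmem).2
    have hfilter_eq : (Finset.univ.filter (fun g : Tup (r+1) n => E g ≤ t))
        = (Finset.univ.filter (fun g : Tup (r+1) n => E g ≤ b)) := by
      apply Finset.filter_congr
      intro g' _
      constructor
      · intro h'; exact le_trans h' htb
      · intro h'
        exact Finset.le_max' _ _ (Finset.mem_image_of_mem E (Finset.mem_filter.2 ⟨Finset.mem_univ _, h'⟩))
    have htA : c ≤ FMIic n r E t := by
      unfold FMIic; rw [hfilter_eq]; exact hb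
    have htW : t ∈ W := Finset.mem_filter.2
      ⟨by rw [ht, ← hgt]; exact Finset.mem_image_of_mem E (Finset.mem_univ gt), htA⟩
    have hle := W.min'_le t htW
    rw [← hg] at hle
    exact Set.mem_Ici.2 (le_trans hle htb)
  · intro b hb
    simp only [Set.mem_Ici] at hb
    rw [← hg] at hWA
    exact le_trans hWA (FMIic_mono E hb)

lemma ebar_eq {n r : ℕ} (hrn : r < n) {c : ℝ} (hc : 0 < c) (hc1 : c ≤ 1)
    (E : Tup (r+1) n → ℝ) :
    ∃ g : Tup (r+1) n, ebar n r E c = E g ∧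
      {b : ℝ | c ≤ FMIic n r E b} = Set.Ici (E g) := by
  obtain ⟨g, hg⟩ := exists_ici hrn hc hc1 E
  exact ⟨g, by rw [ebar, hg, csInf_Ici], hg⟩

lemma ebar_le {n r : ℕ} (hrn : r < n) {c : ℝ} (hc : 0 < c) (hc1 : c ≤ 1)
    (E : Tup (r+1) n → ℝ) {b : ℝ} (hb : c ≤ FMIic n r E b) : ebar n r E c ≤ b := by
  obtain ⟨g, h1, h2⟩ := ebar_eq hrn hc hc1 E
  rw [h1]
  have : b ∈ Set.Ici (E g) := h2 ▸ hb
  exact this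

lemma ebar_mem {n r : ℕ} (hrn : r < n) {c : ℝ} (hc : 0 < c) (hc1 : c ≤ 1)
    (E : Tup (r+1) n → ℝ) : c ≤ FMIic n r E (ebar n r E c) := by
  obtain ⟨g, h1, h2⟩ := ebar_eq hrn hc hc1 E
  rw [h1]
  have : E g ∈ Set.Ici (E g) := Set.self_mem_Ici
  rw [← h2] at this
  exact this

lemma le_ebar_iff {n r : ℕ} (hrn : r < n) {c : ℝ} (hc : 0 < c) (hc1 : c ≤ 1)
    (E : Tup (r+1) n → ℝ) (a : ℝ) :
    a ≤ ebar n r E c ↔ ∀ g : Tup (r+1) n, c ≤ FMIic n r E (E g) → a ≤ E g := by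
  obtain ⟨g0, h1, h2⟩ := ebar_eq hrn hc hc1 E
  constructor
  · intro h g hg
    have : E g ∈ Set.Ici (E g0) := h2 ▸ hg
    exact le_trans (h1 ▸ h) this
  · intro h
    rw [h1]
    apply h g0
    have : E g0 ∈ Set.Ici (E g0) := Set.self_mem_Ici
    rw [← h2] at this
    exact this


open Classical in
lemma measurable_FMIic_comp {𝒮 : Type*} [MeasurableSpace 𝒮] {n r : ℕ}
    (f : (Fin (r+1) → 𝒮) → ℝ) (hf : Measurable f) (h : Tup (r+1) n) :
    Measurable (fun x : Fin n → 𝒮 =>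
      FMIic n r (fun g => f (fun i => x (g.1 i))) (f (fun i => x (h.1 i)))) := by
  have hE : ∀ g : Tup (r+1) n, Measurable (fun x : Fin n → 𝒮 => f (fun i => x (g.1 i))) :=
    fun g => hf.comp (measurable_pi_iff.mpr fun i => measurable_pi_apply _)
  have hcard : Measurable (fun x : Fin n → 𝒮 => ((Finset.univ.filter
      (fun g : Tup (r+1) n => f (fun i => x (g.1 i)) ≤ f (fun i => x (h.1 i)))).card : ℝ)) := by
    have heq : (fun x : Fin n → 𝒮 => ((Finset.univ.filter
        (fun g : Tup (r+1) n => f (fun i => x (g.1 i)) ≤ f (fun i => x (h.1 i)))).card : ℝ))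
        = fun x => ∑ g : Tup (r+1) n,
          (if f (fun i => x (g.1 i)) ≤ f (fun i => x (h.1 i)) then (1:ℝ) else 0) := by
      funext x
      rw [Finset.card_filter]
      push_cast
      rfl
    rw [heq]
    exact Finset.measurable_sum _ fun g _ =>
      Measurable.ite (measurableSet_le (hE g) (hE h)) measurable_const measurable_const
  simpa only [FMIic] using hcard.const_mul (((n - r - 1).factorial : ℝ) / (n.factorial : ℝ))

open Classical in
lemma measurableSet_B {𝒮 : Type*} [MeasurableSpace 𝒮] {n r : ℕ} (hrn : r < n) {c : ℝ}
    (hc : 0 < c) (hc1 : c ≤ 1) (f : (Fin (r+1) → 𝒮) → ℝ) (hf : Measurable f)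
    (g : Tup (r+1) n) :
    MeasurableSet {x : Fin n → 𝒮 | f (fun i => x (g.1 i)) ≤
      ebar n r (fun g' => f (fun i => x (g'.1 i))) c} := by
  have hE : ∀ g : Tup (r+1) n, Measurable (fun x : Fin n → 𝒮 => f (fun i => x (g.1 i))) :=
    fun g => hf.comp (measurable_pi_iff.mpr fun i => measurable_pi_apply _)
  have hset : {x : Fin n → 𝒮 | f (fun i => x (g.1 i)) ≤
      ebar n r (fun g' => f (fun i => x (g'.1 i))) c}
      = ⋂ h : Tup (r+1) n,
        ({x : Fin n → 𝒮 | c ≤ FMIic n r (fun g' => f (fun i => x (g'.1 i)))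
            (f (fun i => x (h.1 i)))}ᶜ ∪
          {x : Fin n → 𝒮 | f (fun i => x (g.1 i)) ≤ f (fun i => x (h.1 i))}) := by
    ext x
    rw [Set.mem_setOf_eq, le_ebar_iff hrn hc hc1]
    simp only [Set.mem_iInter, Set.mem_union, Set.mem_compl_iff, Set.mem_setOf_eq]
    constructor
    · intro hh h
      rcases le_or_gt c (FMIic n r (fun g' => f (fun i => x (g'.1 i))) (f (fun i => x (h.1 i))))
        with h1 | h1
      · exact Or.inr (hh h h1)
      · exact Or.inl (not_le.mpr h1)
    · intro hh h h1
      rcases hh h with h2 | h2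
      · exact absurd h1 h2
      · exact h2
  rw [hset]
  exact MeasurableSet.iInter fun h =>
    ((measurableSet_le measurable_const (measurable_FMIic_comp f hf h)).compl).union
      (measurableSet_le (hE g) (hE h))

lemma exists_perm {s m : ℕ} (u v : Fin s → Fin m) (hu : Function.Injective u)
    (hv : Function.Injective v) : ∃ σ : Equiv.Perm (Fin m), ∀ i, σ (u i) = v i := by
  classical
  have hcard : Fintype.card ((Set.range u)ᶜ : Set (Fin m)) =
      Fintype.card ((Set.range v)ᶜ : Set (Fin m)) := by
    rw [Fintype.card_compl_set, Fintype.card_compl_set,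
      Set.card_range_of_injective hu, Set.card_range_of_injective hv]
  let e1 : Set.range u ≃ Set.range v :=
    (Equiv.ofInjective u hu).symm.trans (Equiv.ofInjective v hv)
  let e2 : ((Set.range u)ᶜ : Set (Fin m)) ≃ ((Set.range v)ᶜ : Set (Fin m)) :=
    Fintype.equivOfCardEq hcard
  refine ⟨(Equiv.Set.sumCompl (Set.range u)).symm.trans
    ((e1.sumCongr e2).trans (Equiv.Set.sumCompl (Set.range v))), fun i => ?_⟩
  have h1 : (Equiv.Set.sumCompl (Set.range u)).symm (u i) =
      Sum.inl ⟨u i, Set.mem_range_self i⟩ :=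
    Equiv.Set.sumCompl_symm_apply_of_mem (Set.mem_range_self i)
  simp only [Equiv.trans_apply, h1, Equiv.sumCongr_apply, Sum.map_inl,
    Equiv.Set.sumCompl_apply_inl, Function.comp_apply]
  have h2 : (⟨u i, Set.mem_range_self i⟩ : Set.range u) = Equiv.ofInjective u hu i := rfl
  rw [h2]
  simp [e1]

lemma snoc_inj {n r : ℕ} (hrn : r < n) :
    Function.Injective
      (Fin.snoc (fun i : Fin r => (Fin.castLE (Nat.le_succ_of_le hrn.le : r ≤ n+1) i)) (Fin.last n) :
        Fin (r+1) → Fin (n+1)) := by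
  set F : Fin (r+1) → Fin (n+1) :=
    (Fin.snoc (fun i : Fin r => (Fin.castLE (by omega : r ≤ n+1) i)) (Fin.last n)) with hF
  have hv : ∀ j : Fin (r+1), (F j : ℕ) = if (j : ℕ) < r then (j : ℕ) else n := by
    intro j
    refine Fin.lastCases ?_ (fun i => ?_) j
    · simp [hF, Fin.snoc_last]
    · simp [hF, Fin.snoc_castSucc, i.isLt]
  intro a b hab
  have h := congrArg Fin.val hab
  rw [hv a, hv b] at h
  have ha := a.isLt
  have hb := b.isLt
  apply Fin.ext
  split_ifs at h <;> omega

end TransferUQ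

open scoped ENNReal
open TransferUQ

/-- **Proposition 1, one-sided guarantee.** If `S_1, …, S_{n+1}` are i.i.d. samples and
`e_{(d_1,…,d_r),d} = f(S_{d_1},…,S_{d_r},S_d)` is the transfer error from training samples
`d_1,…,d_r` to test sample `d`, then the transfer error `f(S_1,…,S_r,S_{n+1})` onto the unseen
domain `n+1` satisfies `P(f(S_1,…,S_r,S_{n+1}) ≤ ē_τ^M) ≥ τ (n-r)/(n+1)`. -/
theorem transfer_error_one_sided_coverage
    {Ω : Type*} [MeasurableSpace Ω] (P : Measure Ω) [IsProbabilityMeasure P]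
    {𝒮 : Type*} [MeasurableSpace 𝒮] (μ : Measure 𝒮) [IsProbabilityMeasure μ]
    (n r : ℕ) (hr : 1 ≤ r) (hrn : r < n)
    (S : Fin (n+1) → Ω → 𝒮) (hSmeas : ∀ i, Measurable (S i))
    (hindep : iIndepFun S P)
    (hlaw : ∀ i, P.map (S i) = μ)
    (f : (Fin (r+1) → 𝒮) → ℝ) (hf : Measurable f)
    (τ : ℝ) (hτ : τ ∈ Set.Ioo (0:ℝ) 1) :
    ENNReal.ofReal (τ * ((n : ℝ) - r) / (n + 1)) ≤
      P {ω | f (Fin.snoc (fun i : Fin r => S (Fin.castLE (by omega) i) ω) (S (Fin.last n) ω)) ≤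
          TransferUQ.ebar n r
            (fun g => f (fun i => S (Fin.castSucc (g.val i)) ω)) τ} := by
  classical
  obtain ⟨hτ0, hτ1⟩ := hτ
  have hrn1 : r < n + 1 := by omega
  have hnr : (0:ℝ) < (n:ℝ) - r := by
    have : (r:ℝ) < n := by exact_mod_cast hrn
    linarith
  set c : ℝ := τ * ((n:ℝ) - r) / (n + 1) with hc_def
  have hc0 : 0 < c := div_pos (mul_pos hτ0 hnr) (by positivity)
  have hc1 : c ≤ 1 := by
    rw [hc_def, div_le_one (by positivity)]
    nlinarith [Nat.cast_nonneg (α := ℝ) r]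
  set π : Measure (Fin (n+1) → 𝒮) := Measure.pi (fun _ => μ) with hπ_def
  haveI : IsProbabilityMeasure π := by rw [hπ_def]; infer_instance
  set X : Ω → (Fin (n+1) → 𝒮) := fun ω i => S i ω with hX_def
  have hX : Measurable X := measurable_pi_iff.mpr hSmeas
  have hmap : P.map X = π := by
    rw [hπ_def]
    refine (Measure.pi_eq fun s hs => ?_).symm
    rw [Measure.map_apply hX (MeasurableSet.univ_pi hs)]
    have hpre : X ⁻¹' (Set.univ.pi s) = ⋂ i ∈ (Finset.univ : Finset (Fin (n+1))), S i ⁻¹' s i := by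
      ext ω; simp [Set.mem_pi, hX_def]
    rw [hpre, hindep.measure_inter_preimage_eq_mul Finset.univ (fun i _ => hs i)]
    refine Finset.prod_congr rfl fun i _ => ?_
    rw [← hlaw i, Measure.map_apply (hSmeas i) (hs i)]
  -- the test tuple
  set g0 : Tup (r+1) (n+1) :=
    ⟨Fin.snoc (fun i : Fin r => (Fin.castLE (by omega : r ≤ n+1) i)) (Fin.last n),
      snoc_inj hrn⟩ with hg0_def
  -- the events
  set B : Tup (r+1) (n+1) → Set (Fin (n+1) → 𝒮) :=
    fun g => {x | f (fun i => x (g.1 i)) ≤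
      ebar (n+1) r (fun g' => f (fun i => x (g'.1 i))) c} with hB_def
  have hBmeas : ∀ g, MeasurableSet (B g) := fun g => measurableSet_B hrn1 hc0 hc1 f hf g
  -- invariance of the quantile under permutations
  have hQσ : ∀ (σ : Equiv.Perm (Fin (n+1))) (x : Fin (n+1) → 𝒮),
      ebar (n+1) r (fun g' : Tup (r+1) (n+1) => f (fun i => x (σ (g'.1 i)))) c
        = ebar (n+1) r (fun g' : Tup (r+1) (n+1) => f (fun i => x (g'.1 i))) c := by
    intro σ x
    have hF : ∀ b, FMIic (n+1) r (fun g' : Tup (r+1) (n+1) => f (fun i => x (σ (g'.1 i)))) b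
        = FMIic (n+1) r (fun g' : Tup (r+1) (n+1) => f (fun i => x (g'.1 i))) b := by
      intro b
      simp only [FMIic]
      congr 1
      norm_cast
      apply Finset.card_bij'
        (fun (g : Tup (r+1) (n+1)) _ => (⟨σ ∘ g.1, σ.injective.comp g.2⟩ : Tup (r+1) (n+1)))
        (fun (g : Tup (r+1) (n+1)) _ => (⟨σ.symm ∘ g.1, σ.symm.injective.comp g.2⟩ :
          Tup (r+1) (n+1)))
      · intro g hg
        simp only [Finset.mem_filter, Finset.mem_univ, true_and] at hg ⊢
        exact hg
      · intro g hg
        simp only [Finset.mem_filter, Finset.mem_univ, true_and] at hg ⊢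
        have : (fun i => x (σ (σ.symm (g.1 i)))) = fun i => x (g.1 i) := by
          funext i; rw [Equiv.apply_symm_apply]
        simpa [Function.comp] using (this ▸ hg)
      · intro g hg
        apply Subtype.ext
        funext i
        simp [Function.comp]
      · intro g hg
        apply Subtype.ext
        funext i
        simp [Function.comp]
    unfold ebar
    congr 1
    ext b
    simp only [Set.mem_setOf_eq, hF]
  -- all events have the same probability
  have hπB : ∀ g : Tup (r+1) (n+1), π (B g) = π (B g0) := by
    intro g
    obtain ⟨σ, hσ⟩ := exists_perm g0.1 g.1 g0.2 g.2
    have hpre : B g = (fun x : Fin (n+1) → 𝒮 => fun a => x (σ a)) ⁻¹' (B g0) := by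
      ext x
      simp only [hB_def, Set.mem_setOf_eq, Set.mem_preimage]
      have hEf : f (fun i => x (σ (g0.1 i))) = f (fun i => x (g.1 i)) := by
        congr 1; funext i; rw [hσ i]
      rw [show (fun g' : Tup (r+1) (n+1) => f (fun i => (fun a => x (σ a)) (g'.1 i)))
          = fun g' : Tup (r+1) (n+1) => f (fun i => x (σ (g'.1 i))) from rfl,
        hQσ σ x, hEf]
    have hmp : MeasurePreserving (fun x : Fin (n+1) → 𝒮 => fun a => x (σ a)) π π := by
      have h1 := (MeasureTheory.measurePreserving_piCongrLeft (fun _ : Fin (n+1) => μ) σ).symm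
      have h2 : (⇑(MeasurableEquiv.piCongrLeft (fun _ : Fin (n+1) => 𝒮) σ).symm)
          = fun x : Fin (n+1) → 𝒮 => fun a => x (σ a) := rfl
      rw [h2] at h1
      exact h1
    rw [hpre, hmp.measure_preimage (hBmeas g0).nullMeasurableSet]
  -- pointwise counting bound
  have hNpos : 0 < Fintype.card (Tup (r+1) (n+1)) :=
    Fintype.card_pos_iff.2 ⟨⟨Fin.castLE (by omega), Fin.castLE_injective _⟩⟩
  have hptwise : ∀ x : Fin (n+1) → 𝒮,
      ENNReal.ofReal c * (Fintype.card (Tup (r+1) (n+1)) : ℝ≥0∞) ≤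
        ∑ g : Tup (r+1) (n+1), (B g).indicator (1 : (Fin (n+1) → 𝒮) → ℝ≥0∞) x := by
    intro x
    have h1 : c ≤ FMIic (n+1) r (fun g' : Tup (r+1) (n+1) => f (fun i => x (g'.1 i)))
        (ebar (n+1) r (fun g' : Tup (r+1) (n+1) => f (fun i => x (g'.1 i))) c) :=
      ebar_mem hrn1 hc0 hc1 _
    set k := (Finset.univ.filter (fun g : Tup (r+1) (n+1) => f (fun i => x (g.1 i)) ≤
      ebar (n+1) r (fun g' : Tup (r+1) (n+1) => f (fun i => x (g'.1 i))) c)).card with hk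
    have h1' : c ≤ ((n + 1 - r - 1).factorial : ℝ) / ((n+1).factorial : ℝ) * k := h1
    have hco := coeff_mul_card (show r < n + 1 by omega)
    have h2 : c * (Fintype.card (Tup (r+1) (n+1)) : ℝ) ≤ k := by
      set a := ((n + 1 - r - 1).factorial : ℝ) / ((n+1).factorial : ℝ) with ha
      have ha0 : 0 ≤ a := by rw [ha]; positivity
      calc c * (Fintype.card (Tup (r+1) (n+1)) : ℝ)
          ≤ (a * k) * (Fintype.card (Tup (r+1) (n+1)) : ℝ) :=
            mul_le_mul_of_nonneg_right h1' (by positivity)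
        _ = (k : ℝ) * (a * (Fintype.card (Tup (r+1) (n+1)) : ℝ)) := by ring
        _ = k := by rw [hco, mul_one]
    have h3 : ∑ g : Tup (r+1) (n+1), (B g).indicator (1 : (Fin (n+1) → 𝒮) → ℝ≥0∞) x = (k : ℝ≥0∞) := by
      rw [hk]
      simp only [Set.indicator_apply, Pi.one_apply, hB_def, Set.mem_setOf_eq]
      rw [Finset.sum_boole]
    rw [h3]
    calc ENNReal.ofReal c * (Fintype.card (Tup (r+1) (n+1)) : ℝ≥0∞)
        = ENNReal.ofReal (c * (Fintype.card (Tup (r+1) (n+1)) : ℝ)) := by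
          rw [ENNReal.ofReal_mul hc0.le, ENNReal.ofReal_natCast]
      _ ≤ ENNReal.ofReal (k : ℝ) := ENNReal.ofReal_le_ofReal h2
      _ = (k : ℝ≥0∞) := ENNReal.ofReal_natCast k
  -- integrate
  have hsum : ENNReal.ofReal c * (Fintype.card (Tup (r+1) (n+1)) : ℝ≥0∞) ≤
      (Fintype.card (Tup (r+1) (n+1)) : ℝ≥0∞) * π (B g0) := by
    calc ENNReal.ofReal c * (Fintype.card (Tup (r+1) (n+1)) : ℝ≥0∞)
        = ∫⁻ _, ENNReal.ofReal c * (Fintype.card (Tup (r+1) (n+1)) : ℝ≥0∞) ∂π := by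
          rw [lintegral_const, measure_univ, mul_one]
      _ ≤ ∫⁻ x, ∑ g : Tup (r+1) (n+1), (B g).indicator (1 : (Fin (n+1) → 𝒮) → ℝ≥0∞) x ∂π :=
          lintegral_mono hptwise
      _ = ∑ g : Tup (r+1) (n+1), ∫⁻ x, (B g).indicator (1 : (Fin (n+1) → 𝒮) → ℝ≥0∞) x ∂π := by
          rw [lintegral_finset_sum _ (fun g _ => measurable_one.indicator (hBmeas g))]
      _ = ∑ g : Tup (r+1) (n+1), π (B g) := by
          exact Finset.sum_congr rfl fun g _ => lintegral_indicator_one (hBmeas g)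
      _ = ∑ _g : Tup (r+1) (n+1), π (B g0) := Finset.sum_congr rfl fun g _ => hπB g
      _ = (Fintype.card (Tup (r+1) (n+1)) : ℝ≥0∞) * π (B g0) := by
          rw [Finset.sum_const, Finset.card_univ, nsmul_eq_mul]
  have hfinal : ENNReal.ofReal c ≤ π (B g0) := by
    have hN0 : (Fintype.card (Tup (r+1) (n+1)) : ℝ≥0∞) ≠ 0 := by
      exact_mod_cast hNpos.ne'
    have hN1 : (Fintype.card (Tup (r+1) (n+1)) : ℝ≥0∞) ≠ ⊤ := ENNReal.natCast_ne_top _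
    rw [mul_comm] at hsum
    exact (ENNReal.mul_le_mul_iff_right hN0 hN1).1 hsum
  -- the inclusion of quantile sets
  have hincl : ∀ (x : Fin (n+1) → 𝒮) (b : ℝ),
      τ ≤ FMIic n r (fun g : Tup (r+1) n => f (fun i => x (Fin.castSucc (g.1 i)))) b →
      c ≤ FMIic (n+1) r (fun g : Tup (r+1) (n+1) => f (fun i => x (g.1 i))) b := by
    intro x b hb
    set cM := (Finset.univ.filter (fun g : Tup (r+1) n =>
      f (fun i => x (Fin.castSucc (g.1 i))) ≤ b)).card with hcM
    set cF := (Finset.univ.filter (fun g : Tup (r+1) (n+1) =>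
      f (fun i => x (g.1 i)) ≤ b)).card with hcF
    have hb' : τ ≤ ((n - r - 1).factorial : ℝ) / (n.factorial : ℝ) * cM := hb
    have hcard : cM ≤ cF := by
      rw [hcM, hcF]
      apply Finset.card_le_card_of_injOn
        (fun g : Tup (r+1) n => (⟨Fin.castSucc ∘ g.1,
          (Fin.castSucc_injective n).comp g.2⟩ : Tup (r+1) (n+1)))
      · intro g hg
        simp only [Finset.mem_coe, Finset.mem_filter, Finset.mem_univ, true_and] at hg ⊢
        exact hg
      · intro g1 _ g2 _ hgg
        have hcomp : Fin.castSucc ∘ g1.1 = Fin.castSucc ∘ g2.1 := congrArg Subtype.val hgg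
        apply Subtype.ext
        funext i
        exact Fin.castSucc_injective n (congrFun hcomp i)
    show c ≤ ((n + 1 - r - 1).factorial : ℝ) / ((n+1).factorial : ℝ) * cF
    have harg : n + 1 - r - 1 = n - r := by omega
    rw [harg]
    have hsub1 : ((n - r : ℕ) : ℝ) = (n:ℝ) - r := by
      rw [Nat.cast_sub hrn.le]
    have hsub2 : ((n - r - 1 : ℕ) : ℝ) = (n:ℝ) - r - 1 := by
      rw [show n - r - 1 = n - (r + 1) by omega, Nat.cast_sub (by omega : r + 1 ≤ n)]
      push_cast; ring
    have key1 : ((n - r).factorial : ℝ) = ((n:ℝ) - r) * ((n - r - 1).factorial : ℝ) := by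
      rw [show n - r = (n - r - 1) + 1 by omega, Nat.factorial_succ]
      push_cast [hsub2]
      ring
    have key2 : (((n+1)).factorial : ℝ) = ((n:ℝ) + 1) * (n.factorial : ℝ) := by
      rw [Nat.factorial_succ]; push_cast; ring
    have hA : ((n - r).factorial : ℝ) / (((n+1)).factorial : ℝ)
        = ((n:ℝ) - r) / ((n:ℝ) + 1) * (((n - r - 1).factorial : ℝ) / (n.factorial : ℝ)) := by
      rw [key1, key2]
      field_simp
    have hfpos : (0:ℝ) ≤ ((n:ℝ) - r) / ((n:ℝ) + 1) := div_nonneg hnr.le (by positivity)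
    calc c = ((n:ℝ) - r) / ((n:ℝ) + 1) * τ := by rw [hc_def]; ring
      _ ≤ ((n:ℝ) - r) / ((n:ℝ) + 1) *
          (((n - r - 1).factorial : ℝ) / (n.factorial : ℝ) * cM) :=
            mul_le_mul_of_nonneg_left hb' hfpos
      _ = ((n - r).factorial : ℝ) / (((n+1)).factorial : ℝ) * cM := by rw [hA]; ring
      _ ≤ ((n - r).factorial : ℝ) / (((n+1)).factorial : ℝ) * cF := by
          apply mul_le_mul_of_nonneg_left _ (by positivity)
          exact_mod_cast hcard
  -- transfer to Ω
  have hsub : X ⁻¹' (B g0) ⊆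
      {ω | f (Fin.snoc (fun i : Fin r => S (Fin.castLE (by omega) i) ω) (S (Fin.last n) ω)) ≤
        TransferUQ.ebar n r (fun g => f (fun i => S (Fin.castSucc (g.val i)) ω)) τ} := by
    intro ω hω
    simp only [Set.mem_preimage, hB_def, Set.mem_setOf_eq] at hω ⊢
    have he : f (Fin.snoc (fun i : Fin r => S (Fin.castLE (by omega : r ≤ n+1) i) ω)
        (S (Fin.last n) ω)) = f (fun i => X ω (g0.1 i)) := by
      congr 1
      funext j
      refine Fin.lastCases ?_ (fun i => ?_) j
      · simp [hg0_def, Fin.snoc_last, hX_def]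
      · simp [hg0_def, Fin.snoc_castSucc, hX_def]
    rw [he]
    refine le_trans hω ?_
    have hne' : {b : ℝ | τ ≤ FMIic n r
        (fun g : Tup (r+1) n => f (fun i => S (Fin.castSucc (g.1 i)) ω)) b}.Nonempty := by
      obtain ⟨g, hg⟩ := exists_ici hrn hτ0 hτ1.le
        (fun g : Tup (r+1) n => f (fun i => S (Fin.castSucc (g.1 i)) ω))
      rw [hg]
      exact ⟨_, Set.self_mem_Ici⟩
    apply le_csInf hne'
    intro b hb
    exact ebar_le hrn1 hc0 hc1 _ (hincl (X ω) b hb)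
  calc ENNReal.ofReal (τ * ((n : ℝ) - r) / (n + 1)) = ENNReal.ofReal c := by rw [hc_def]
    _ ≤ π (B g0) := hfinal
    _ = P (X ⁻¹' (B g0)) := by rw [← hmap, Measure.map_apply hX (hBmeas g0)]
    _ ≤ _ := measure_mono hsub
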